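/- Let T be a bounded operator on a Hilbert space with T^q = B for some bounded operator B, and suppose w is a primitive q-th root of unity with w·σ_e(T) = σ_e(T). Then σ_e(T) = {μ ∈ ℂ : μ^q ∈ σ_e(B)}. -/

import Mathlib

/-- An operator is Fredholm if it has closed range, finite-dimensional kernel
and finite-dimensional cokernel. -/
def IsFredholm {H : Type*} [NormedAddCommGroup H] [InnerProductSpace ℂ H]
    [CompleteSpace H] (T : H →L[ℂ] H) : Prop :=
  IsClosed (LinearMap.range (T : H →ₗ[ℂ] H) : Set H) ∧
    FiniteDimensional ℂ (LinearMap.ker (T : H →ₗ[ℂ] H)) ∧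
    FiniteDimensional ℂ (H ⧸ LinearMap.range (T : H →ₗ[ℂ] H))

/-- The essential (Fredholm) spectrum. -/
def essSpectrum {H : Type*} [NormedAddCommGroup H] [InnerProductSpace ℂ H]
    [CompleteSpace H] (T : H →L[ℂ] H) : Set ℂ :=
  {μ : ℂ | ¬ IsFredholm (T - μ • 1)}


open LinearMap

section general
variable {V W : Type*} [AddCommGroup V] [Module ℂ V] [AddCommGroup W] [Module ℂ W]

lemma findim_sub_quot (S : Submodule ℂ V) (h1 : FiniteDimensional ℂ S)
    (h2 : FiniteDimensional ℂ (V ⧸ S)) : FiniteDimensional ℂ V := by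
  obtain ⟨S', hc⟩ := S.exists_isCompl
  have h3 : FiniteDimensional ℂ S' :=
    (Submodule.quotientEquivOfIsCompl S S' hc).finiteDimensional
  exact (Submodule.prodEquivOfIsCompl S S' hc).finiteDimensional

lemma findim_ker_range (f : V →ₗ[ℂ] W) (h1 : FiniteDimensional ℂ (ker f))
    (h2 : FiniteDimensional ℂ (range f)) : FiniteDimensional ℂ V := by
  have : FiniteDimensional ℂ (V ⧸ ker f) := f.quotKerEquivRange.symm.finiteDimensional
  exact findim_sub_quot (ker f) h1 this

end general

section fred
variable {H : Type*} [NormedAddCommGroup H] [InnerProductSpace ℂ H] [CompleteSpace H]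

/-- Auxiliary "Fredholm without closedness" predicate. -/
def Fred2 (T : H →L[ℂ] H) : Prop :=
  FiniteDimensional ℂ (LinearMap.ker (T : H →ₗ[ℂ] H)) ∧ FiniteDimensional ℂ (H ⧸ LinearMap.range (T : H →ₗ[ℂ] H))

lemma fred2_mul {A C : H →L[ℂ] H} (hA : Fred2 A) (hC : Fred2 C) : Fred2 (A * C) := by
  constructor
  · -- kernel
    have hmem : ∀ x : ker ((A * C : H →L[ℂ] H) : H →ₗ[ℂ] H), C (x : H) ∈ ker (A : H →ₗ[ℂ] H) := by
      intro x
      have hx : (A * C) (x : H) = 0 := x.2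
      rw [ContinuousLinearMap.mul_apply] at hx
      simp only [LinearMap.mem_ker, ContinuousLinearMap.coe_coe]
      exact hx
    set f : ker ((A * C : H →L[ℂ] H) : H →ₗ[ℂ] H) →ₗ[ℂ] ker (A : H →ₗ[ℂ] H) :=
      LinearMap.codRestrict (ker (A : H →ₗ[ℂ] H)) ((C : H →ₗ[ℂ] H).comp (ker ((A * C : H →L[ℂ] H) : H →ₗ[ℂ] H)).subtype)
        (fun x => hmem x) with hf
    have hker : FiniteDimensional ℂ (ker f) := by
      have hle : Submodule.map (ker ((A * C : H →L[ℂ] H) : H →ₗ[ℂ] H)).subtype (ker f) ≤ ker (C : H →ₗ[ℂ] H) := by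
        rintro x ⟨y, hy, rfl⟩
        have : f y = 0 := hy
        have : C (y : H) = 0 := by
          have := congrArg (Subtype.val) this
          exact this
        exact this
      haveI := hC.1
      have h2 : FiniteDimensional ℂ (Submodule.map (ker ((A * C : H →L[ℂ] H) : H →ₗ[ℂ] H)).subtype (ker f)) :=
        Submodule.finiteDimensional_of_le hle
      exact (Submodule.equivMapOfInjective _ (Submodule.injective_subtype _)
        (ker f)).symm.finiteDimensional
    have hrange : FiniteDimensional ℂ (range f) := by
      haveI := hA.1
      infer_instance
    exact findim_ker_range f hker hrange
  · -- cokernel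
    have hle1 : range ((A * C : H →L[ℂ] H) : H →ₗ[ℂ] H) ≤ (range (A : H →ₗ[ℂ] H)).comap (LinearMap.id : H →ₗ[ℂ] H) := by
      rintro x ⟨y, rfl⟩
      exact ⟨C y, by simp [ContinuousLinearMap.mul_apply]⟩
    set g : (H ⧸ range ((A * C : H →L[ℂ] H) : H →ₗ[ℂ] H)) →ₗ[ℂ] (H ⧸ range (A : H →ₗ[ℂ] H)) :=
      Submodule.mapQ _ _ LinearMap.id hle1 with hg
    have hle2 : range (C : H →ₗ[ℂ] H) ≤ (range ((A * C : H →L[ℂ] H) : H →ₗ[ℂ] H)).comap (A : H →ₗ[ℂ] H) := by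
      rintro x ⟨y, rfl⟩
      exact ⟨y, by simp [ContinuousLinearMap.mul_apply]⟩
    set φ : (H ⧸ range (C : H →ₗ[ℂ] H)) →ₗ[ℂ] (H ⧸ range ((A * C : H →L[ℂ] H) : H →ₗ[ℂ] H)) :=
      Submodule.mapQ _ _ (A : H →ₗ[ℂ] H) hle2 with hφ
    have hker : FiniteDimensional ℂ (ker g) := by
      have hle : ker g ≤ range φ := by
        intro x hx
        obtain ⟨y, rfl⟩ := Submodule.Quotient.mk_surjective _ x
        rw [mem_ker, hg, Submodule.mapQ_apply] at hx
        simp only [LinearMap.id_apply] at hx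
        rw [Submodule.Quotient.mk_eq_zero] at hx
        obtain ⟨z, rfl⟩ := hx
        exact ⟨Submodule.Quotient.mk z, by simp only [hφ, Submodule.mapQ_apply, ContinuousLinearMap.coe_coe]⟩
      haveI := hC.2
      exact Submodule.finiteDimensional_of_le hle
    have hrange : FiniteDimensional ℂ (range g) := by
      haveI := hA.2
      infer_instance
    exact findim_ker_range g hker hrange

lemma fred2_of_mul_comm {A C : H →L[ℂ] H} (hcomm : A * C = C * A)
    (h : Fred2 (A * C)) : Fred2 A := by
  constructor
  · have hle : ker (A : H →ₗ[ℂ] H) ≤ ker ((A * C : H →L[ℂ] H) : H →ₗ[ℂ] H) := by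
      intro x hx
      rw [mem_ker] at hx ⊢
      rw [hcomm]
      simp [ContinuousLinearMap.mul_apply, hx]
    haveI := h.1
    exact Submodule.finiteDimensional_of_le hle
  · have hle1 : range ((A * C : H →L[ℂ] H) : H →ₗ[ℂ] H) ≤ (range (A : H →ₗ[ℂ] H)).comap (LinearMap.id : H →ₗ[ℂ] H) := by
      rintro x ⟨y, rfl⟩
      exact ⟨C y, by simp [ContinuousLinearMap.mul_apply]⟩
    set g : (H ⧸ range ((A * C : H →L[ℂ] H) : H →ₗ[ℂ] H)) →ₗ[ℂ] (H ⧸ range (A : H →ₗ[ℂ] H)) :=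
      Submodule.mapQ _ _ LinearMap.id hle1 with hg
    have hsurj : Function.Surjective g := by
      intro x
      obtain ⟨y, rfl⟩ := Submodule.Quotient.mk_surjective _ x
      exact ⟨Submodule.Quotient.mk y, by simp only [hg, Submodule.mapQ_apply, LinearMap.id_apply]⟩
    haveI := h.2
    exact Module.Finite.of_surjective g hsurj

end fred

section closed
variable {H : Type*} [NormedAddCommGroup H] [InnerProductSpace ℂ H] [CompleteSpace H]

lemma fred2_closed_range {T : H →L[ℂ] H} (h : Fred2 T) :
    IsClosed (LinearMap.range (T : H →ₗ[ℂ] H) : Set H) := by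
  haveI := h.1
  haveI := h.2
  set K : Submodule ℂ H := ker (T : H →ₗ[ℂ] H) with hK
  haveI : CompleteSpace K := FiniteDimensional.complete ℂ K
  have hcompl : IsCompl K Kᗮ := Submodule.isCompl_orthogonal_of_hasOrthogonalProjection
  set R : Submodule ℂ H := range (T : H →ₗ[ℂ] H) with hR
  obtain ⟨F, hF⟩ := R.exists_isCompl
  haveI : FiniteDimensional ℂ F :=
    (Submodule.quotientEquivOfIsCompl R F hF).finiteDimensional
  haveI : CompleteSpace F := FiniteDimensional.complete ℂ F
  set S : (Kᗮ × F) →L[ℂ] H := (T.comp Kᗮ.subtypeL).coprod F.subtypeL with hS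
  have hSapp : ∀ p : Kᗮ × F, S p = T (p.1 : H) + (p.2 : H) := fun p => rfl
  have hinj : ker (S : (Kᗮ × F) →ₗ[ℂ] H) = ⊥ := by
    rw [LinearMap.ker_eq_bot']
    intro p hp
    have hp' : T (p.1 : H) + (p.2 : H) = 0 := hp
    have h1 : T (p.1 : H) ∈ R ⊓ F := by
      constructor
      · exact ⟨_, rfl⟩
      · have : T (p.1 : H) = -(p.2 : H) := by
          rw [eq_neg_iff_add_eq_zero]; exact hp'
        rw [this]
        exact F.neg_mem p.2.2
    rw [disjoint_iff.mp hF.disjoint, Submodule.mem_bot] at h1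
    have h2 : (p.2 : H) = 0 := by
      have := hp'
      rw [h1, zero_add] at this
      exact this
    have h3 : (p.1 : H) ∈ K ⊓ Kᗮ := ⟨h1, p.1.2⟩
    rw [disjoint_iff.mp hcompl.disjoint, Submodule.mem_bot] at h3
    exact Prod.ext (Subtype.ext h3) (Subtype.ext h2)
  have hdecomp : ∀ u : H, ∃ e₀ : Kᗮ, T u = T (e₀ : H) := by
    intro u
    have hu : u ∈ K ⊔ Kᗮ := by rw [hcompl.sup_eq_top]; trivial
    obtain ⟨k, hk, e₀, he₀, hke⟩ := Submodule.mem_sup.mp hu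
    refine ⟨⟨e₀, he₀⟩, ?_⟩
    have hk0 : T k = 0 := hk
    rw [← hke]
    simp [map_add, hk0]
  have hsurj : range (S : (Kᗮ × F) →ₗ[ℂ] H) = ⊤ := by
    rw [LinearMap.range_eq_top]
    intro z
    have hz : z ∈ R ⊔ F := by rw [hF.sup_eq_top]; trivial
    obtain ⟨r, hr, f, hf, hrf⟩ := Submodule.mem_sup.mp hz
    obtain ⟨u, hu⟩ := hr
    obtain ⟨e₀, he₀⟩ := hdecomp u
    refine ⟨(e₀, ⟨f, hf⟩), ?_⟩
    rw [ContinuousLinearMap.coe_coe, hSapp]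
    simp only
    rw [← he₀, show T u = r from hu, hrf]
  set eS := ContinuousLinearEquiv.ofBijective S hinj hsurj with heS
  have hcoe : ⇑eS = ⇑S := by
    rw [heS]; ext p; simp
  have hset : (R : Set H) = ⇑eS '' {p : Kᗮ × F | p.2 = 0} := by
    ext z
    constructor
    · rintro ⟨u, rfl⟩
      obtain ⟨e₀, he₀⟩ := hdecomp u
      exact ⟨(e₀, 0), rfl, by rw [hcoe, hSapp]; simp [← he₀]⟩
    · rintro ⟨p, hp, rfl⟩
      rw [hcoe, hSapp]
      have : (p.2 : H) = 0 := by rw [hp]; rfl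
      rw [this, add_zero]
      exact ⟨_, rfl⟩
  rw [hR] at hset
  rw [show (LinearMap.range (T : H →ₗ[ℂ] H) : Set H) = (R : Set H) from by rw [hR], hset]
  have hclosed : IsClosed {p : Kᗮ × F | p.2 = 0} :=
    isClosed_eq continuous_snd continuous_const
  exact eS.toHomeomorph.isClosedMap _ hclosed
end closed

section main
variable {H : Type*} [NormedAddCommGroup H] [InnerProductSpace ℂ H] [CompleteSpace H]

lemma isFredholm_iff_fred2 (T : H →L[ℂ] H) : IsFredholm T ↔ Fred2 T := by
  constructor
  · rintro ⟨_, h1, h2⟩; exact ⟨h1, h2⟩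
  · intro h; exact ⟨fred2_closed_range h, h.1, h.2⟩

lemma commute_poly (T : H →L[ℂ] H) (a b : ℂ) :
    Commute (T - a • 1) (T - b • 1) := by
  have h1 : Commute T (b • (1 : H →L[ℂ] H)) := (Commute.one_right T).smul_right b
  have h2 : Commute (a • (1 : H →L[ℂ] H)) T := (Commute.one_left T).smul_left a
  have h3 : Commute (a • (1 : H →L[ℂ] H)) (b • (1 : H →L[ℂ] H)) :=
    ((Commute.refl (1 : H →L[ℂ] H)).smul_left a).smul_right b
  exact ((Commute.refl T).sub_right h1).sub_left (h2.sub_right h3)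

lemma fred2_one : Fred2 (1 : H →L[ℂ] H) := by
  constructor
  · have : LinearMap.ker ((1 : H →L[ℂ] H) : H →ₗ[ℂ] H) = ⊥ := by ext x; simp
    rw [this]; infer_instance
  · have : LinearMap.range ((1 : H →L[ℂ] H) : H →ₗ[ℂ] H) = ⊤ := by
      ext x; simp only [Submodule.mem_top, iff_true]; exact ⟨x, rfl⟩
    rw [this]
    haveI : Subsingleton (H ⧸ (⊤ : Submodule ℂ H)) := inferInstance
    haveI : Finite (H ⧸ (⊤ : Submodule ℂ H)) := Finite.of_subsingleton
    exact Module.Finite.of_finite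

lemma fred2_list_prod : ∀ l : List (H →L[ℂ] H), (∀ x ∈ l, Fred2 x) → Fred2 l.prod := by
  intro l
  induction l with
  | nil => intro _; simpa using fred2_one
  | cons a t ih =>
    intro h
    rw [List.prod_cons]
    exact fred2_mul (h a List.mem_cons_self) (ih fun x hx => h x (List.mem_cons_of_mem a hx))

lemma finset_prod_eq_list_prod {M : Type*} [CommMonoid M] (f : ℕ → M) (n : ℕ) :
    (∏ k ∈ Finset.range n, f k) = ((List.range n).map f).prod := by
  induction n with
  | zero => simp
  | succ m ih =>
    rw [Finset.prod_range_succ, List.range_succ, List.map_append, List.prod_append, ih]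
    simp

lemma prod_factorization (T : H →L[ℂ] H) {q : ℕ} (hq : 0 < q) {w : ℂ}
    (hw : IsPrimitiveRoot w q) (μ : ℂ) :
    ((List.range q).map fun k => T - (w ^ k * μ) • 1).prod = T ^ q - (μ ^ q) • 1 := by
  have hpoly : (Polynomial.X ^ q - Polynomial.C (μ ^ q) : Polynomial ℂ)
      = ∏ i ∈ Finset.range q, (Polynomial.X - Polynomial.C (w ^ i * μ)) :=
    X_pow_sub_C_eq_prod hw hq rfl
  rw [finset_prod_eq_list_prod] at hpoly
  have := congrArg (Polynomial.aeval T) hpoly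
  rw [map_sub, map_pow, Polynomial.aeval_X, Polynomial.aeval_C,
    Algebra.algebraMap_eq_smul_one] at this
  rw [this, map_list_prod (Polynomial.aeval T) _, List.map_map]
  refine congrArg List.prod (List.map_congr_left fun k _ => ?_)
  simp only [Function.comp_apply, map_sub, Polynomial.aeval_X, Polynomial.aeval_C,
    Algebra.algebraMap_eq_smul_one]

end main

theorem essSpectrum_of_power_root_of_unity_invariant
    {H : Type*} [NormedAddCommGroup H] [InnerProductSpace ℂ H] [CompleteSpace H]
    (T B : H →L[ℂ] H) (q : ℕ) (hq : 1 ≤ q) (hB : T ^ q = B)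
    (w : ℂ) (hwq : w ^ q = 1)
    (hprim : ∀ n : ℕ, 0 < n → n < q → w ^ n ≠ 1)
    (hσ : (fun z : ℂ => w * z) '' essSpectrum T = essSpectrum T) :
    essSpectrum T = {μ : ℂ | μ ^ q ∈ essSpectrum B} := by
  have hq0 : 0 < q := hq
  have hw : IsPrimitiveRoot w q := by
    refine ⟨hwq, fun l hl => ?_⟩
    by_contra hnd
    have hmod : l % q ≠ 0 := fun h0 => hnd (Nat.dvd_of_mod_eq_zero h0)
    have hlt : l % q < q := Nat.mod_lt _ hq0
    apply hprim (l % q) (Nat.pos_of_ne_zero hmod) hlt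
    calc w ^ (l % q) = w ^ (l % q) * (w ^ q) ^ (l / q) := by rw [hwq]; ring
      _ = w ^ (l % q + q * (l / q)) := by rw [← pow_mul, ← pow_add]
      _ = w ^ l := by rw [Nat.mod_add_div]
      _ = 1 := hl
  have hw0 : w ≠ 0 := by
    intro h
    rw [h, zero_pow (Nat.pos_iff_ne_zero.mp hq0)] at hwq
    exact zero_ne_one hwq
  have hmemiff : ∀ z : ℂ, z ∈ essSpectrum T ↔ w * z ∈ essSpectrum T := by
    intro z
    constructor
    · intro hz; rw [← hσ]; exact ⟨z, hz, rfl⟩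
    · intro hz
      rw [← hσ] at hz
      obtain ⟨z', hz', he⟩ := hz
      have : z' = z := mul_left_cancel₀ hw0 he
      rwa [← this]
  have hpowmem : ∀ (μ : ℂ) (k : ℕ), μ ∉ essSpectrum T → w ^ k * μ ∉ essSpectrum T := by
    intro μ k hμ
    induction k with
    | zero => simpa using hμ
    | succ m ih =>
      intro hc
      exact ih ((hmemiff _).mpr (by
        rw [show w * (w ^ m * μ) = w ^ (m + 1) * μ by ring]; exact hc))
  set f : ℂ → ℕ → H →L[ℂ] H := fun μ k => T - (w ^ k * μ) • 1 with hf
  have key1 : ∀ μ : ℂ, B - (μ ^ q) • 1 = ((List.range q).map (f μ)).prod := by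
    intro μ
    rw [← hB]
    exact (prod_factorization T hq0 hw μ).symm
  ext μ
  simp only [Set.mem_setOf_eq]
  constructor
  · intro hμ hc
    have h2 : Fred2 (((List.range q).map (f μ)).prod) := by
      rw [← key1]; exact (isFredholm_iff_fred2 _).mp hc
    have hsplit : ((List.range q).map (f μ)).prod
        = f μ 0 * ((List.range (q - 1)).map (fun k => f μ (k + 1))).prod := by
      conv_lhs => rw [show q = (q - 1) + 1 from (Nat.succ_pred_eq_of_pos hq0).symm]
      rw [List.range_succ_eq_map, List.map_cons, List.prod_cons, List.map_map]
      rfl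
    have hcomm : Commute (f μ 0) (((List.range (q - 1)).map fun k => f μ (k + 1)).prod) := by
      refine Commute.list_prod_right _ _ ?_
      intro x hx
      obtain ⟨k, _, rfl⟩ := List.mem_map.mp hx
      exact commute_poly T _ _
    have h3 : Fred2 (f μ 0) := fred2_of_mul_comm hcomm (hsplit ▸ h2)
    have h4 : IsFredholm (T - μ • 1) := by
      refine (isFredholm_iff_fred2 _).mpr ?_
      have : f μ 0 = T - μ • 1 := by rw [hf]; simp
      rwa [this] at h3
    exact hμ h4
  · intro hμq
    by_contra hμ
    apply hμq
    have hall : ∀ x ∈ (List.range q).map (f μ), Fred2 x := by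
      intro x hx
      obtain ⟨k, _, rfl⟩ := List.mem_map.mp hx
      have hk : w ^ k * μ ∉ essSpectrum T := hpowmem μ k hμ
      exact (isFredholm_iff_fred2 _).mp (not_not.mp hk)
    have h2 : Fred2 (((List.range q).map (f μ)).prod) := fred2_list_prod _ hall
    rw [show (B - (μ ^ q) • 1) = ((List.range q).map (f μ)).prod from key1 μ] at *
    exact (isFredholm_iff_fred2 _).mpr h2
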